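/- Let n ≥ 2. Assume (i) the Kakeya maximal estimate Kak(n, r) with r = n/(n−1) (the Kakeya maximal operator conjecture), and (ii) Wongkew's inequality: there exists C_W such that for every ε > 0 there is C'_ε with the property that for every D ≥ 1, every nonzero polynomial P : ℝⁿ → ℝ of degree at most D with zero set Z, and every R ≥ 1, the Lebesgue measure of the intersection of the R^{1/2}-neighborhood of Z with a ball of radius R is at most C'_ε D^{C_W} R^{n − 1/2 + ε}. Then there exists C such that for every ε > 0 there is C_ε with: for every R ≥ 1, D ≥ 1, every nonzero polynomial P : ℝⁿ → ℝ of degree at most D with zero set Z, and every finite collection Ω of (R^{1/2}, R)-tubes contained in a ball of radius R, having R^{−1/2}-separated directions, each tube contained in the R^{1/2}-neighborhood of Z, one has #Ω ≤ C_ε D^C R^{(n−2)/2 + ε}. -/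

import Mathlib

open MeasureTheory Set

noncomputable section

/-- A tube in ℝⁿ, recorded by its center and unit direction. -/
structure Tube (n : ℕ) where
  center : EuclideanSpace ℝ (Fin n)
  dir : EuclideanSpace ℝ (Fin n)
  norm_dir : ‖dir‖ = 1

/-- The (N₁, N₂)-tube (radius N₁, length N₂) with the given center and direction. -/
def Tube.set {n : ℕ} (N₁ N₂ : ℝ) (T : Tube n) : Set (EuclideanSpace ℝ (Fin n)) :=
  {x | |(inner ℝ (x - T.center) T.dir : ℝ)| ≤ N₂ / 2 ∧
    ‖x - T.center - (inner ℝ (x - T.center) T.dir : ℝ) • T.dir‖ ≤ N₁}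

/-- Kak(n, r): the Kakeya maximal estimate
‖Σ_{T∈Ω} 1_T‖_{L^r(ℝⁿ)} ≤ C_ε δ^{−ε} (Σ_{T∈Ω} |T|)^{1/r} δ^{n/r − (n−1)}
for collections Ω of (δ,1)-tubes with δ-separated directions. -/
def KakMax (n : ℕ) (r : ℝ) : Prop :=
  ∀ ε : ℝ, 0 < ε → ∃ Cε > 0, ∀ δ : ℝ, 0 < δ → δ < 1 → ∀ Ω : Finset (Tube n),
    (∀ T ∈ Ω, ∀ T' ∈ Ω, T ≠ T' → δ ≤ dist T.dir T'.dir) →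
    eLpNorm (fun x => ∑ T ∈ Ω, (Tube.set δ 1 T).indicator (fun _ => (1 : ℝ)) x)
        (ENNReal.ofReal r) volume
      ≤ ENNReal.ofReal (Cε * δ ^ (-ε) *
          (∑ T ∈ Ω, (volume (Tube.set δ 1 T)).toReal) ^ (1 / r) *
          δ ^ ((n : ℝ) / r - ((n : ℝ) - 1)))

/-- Wongkew's inequality in ℝⁿ: the R^{1/2}-neighborhood of the zero set of a nonzero
polynomial of degree ≤ D meets any R-ball in measure at most C'_ε D^{C_W} R^{n−1/2+ε}. -/
def Wongkew (n : ℕ) : Prop :=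
  ∃ C_W > 0, ∀ ε : ℝ, 0 < ε → ∃ C'ε > 0, ∀ D : ℕ, 1 ≤ D →
    ∀ P : MvPolynomial (Fin n) ℝ, P ≠ 0 → P.totalDegree ≤ D →
    ∀ R : ℝ, 1 ≤ R → ∀ x₀ : EuclideanSpace ℝ (Fin n),
      volume (Metric.cthickening (Real.sqrt R)
          {x : EuclideanSpace ℝ (Fin n) | MvPolynomial.eval (fun i => x i) P = 0} ∩
        Metric.closedBall x₀ R)
        ≤ ENNReal.ofReal (C'ε * (D : ℝ) ^ C_W * R ^ ((n : ℝ) - 1 / 2 + ε))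

end


open Metric Pointwise

noncomputable section StmtSevenAux
variable {n : ℕ}


lemma tube_closed (N₁ N₂ : ℝ) (T : Tube n) : IsClosed (Tube.set N₁ N₂ T) := by
  have hc : Continuous fun x : EuclideanSpace ℝ (Fin n) => (inner ℝ (x - T.center) T.dir : ℝ) :=
    (continuous_id.sub continuous_const).inner continuous_const
  have h1 : IsClosed {x : EuclideanSpace ℝ (Fin n) |
      |(inner ℝ (x - T.center) T.dir : ℝ)| ≤ N₂ / 2} :=
    isClosed_le (continuous_abs.comp hc) continuous_const
  have h2 : IsClosed {x : EuclideanSpace ℝ (Fin n) |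
      ‖x - T.center - (inner ℝ (x - T.center) T.dir : ℝ) • T.dir‖ ≤ N₁} :=
    isClosed_le (Continuous.norm (((continuous_id.sub continuous_const).sub
      (hc.smul continuous_const)))) continuous_const
  exact h1.inter h2

lemma tube_meas (N₁ N₂ : ℝ) (T : Tube n) : MeasurableSet (Tube.set N₁ N₂ T) :=
  (tube_closed N₁ N₂ T).measurableSet

lemma tube_mono {N₁ N₁' N₂ : ℝ} (h : N₁ ≤ N₁') (T : Tube n) :
    Tube.set N₁ N₂ T ⊆ Tube.set N₁' N₂ T := fun x hx => ⟨hx.1, hx.2.trans h⟩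

lemma tube_subset_ball {δ : ℝ} (hδ : δ ≤ 1) (T : Tube n) :
    Tube.set δ 1 T ⊆ Metric.closedBall T.center 2 := by
  intro x hx
  obtain ⟨h1, h2⟩ := hx
  have : ‖x - T.center‖ ≤ 2 := by
    have := norm_add_le (x - T.center - (inner ℝ (x - T.center) T.dir : ℝ) • T.dir)
      ((inner ℝ (x - T.center) T.dir : ℝ) • T.dir)
    simp only [sub_add_cancel] at this
    have hnd : ‖(inner ℝ (x - T.center) T.dir : ℝ) • T.dir‖ ≤ 1/2 := by
      rw [norm_smul, T.norm_dir, mul_one]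
      exact h1.trans (by norm_num)
    linarith
  simpa [Metric.mem_closedBall, dist_eq_norm] using this

lemma tube_scale {R : ℝ} (hR : 1 ≤ R) (T : Tube n) (x : EuclideanSpace ℝ (Fin n)) :
    x ∈ Tube.set (Real.sqrt R)⁻¹ 1 ⟨R⁻¹ • T.center, T.dir, T.norm_dir⟩ ↔
      R • x ∈ Tube.set (Real.sqrt R) R T := by
  have hR0 : (0:ℝ) < R := by linarith
  have hkey : R • x - T.center = R • (x - R⁻¹ • T.center) := by
    rw [smul_sub, smul_inv_smul₀ hR0.ne']
  have hinner : (inner ℝ (R • x - T.center) T.dir : ℝ) =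
      R * (inner ℝ (x - R⁻¹ • T.center) T.dir : ℝ) := by
    rw [hkey, real_inner_smul_left]
  have hsq : Real.sqrt R * Real.sqrt R = R := Real.mul_self_sqrt hR0.le
  have hs0 : (0:ℝ) < Real.sqrt R := Real.sqrt_pos.2 hR0
  constructor
  · rintro ⟨h1, h2⟩
    constructor
    · rw [hinner, abs_mul, abs_of_pos hR0]
      calc R * |(inner ℝ (x - R⁻¹ • T.center) T.dir : ℝ)| ≤ R * (1/2) :=
            mul_le_mul_of_nonneg_left h1 hR0.le
        _ = R / 2 := by ring
    · rw [hinner, hkey, ← smul_smul, ← smul_sub, norm_smul, Real.norm_eq_abs,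
        abs_of_pos hR0]
      calc R * ‖x - R⁻¹ • T.center - (inner ℝ (x - R⁻¹ • T.center) T.dir : ℝ) • T.dir‖
          ≤ R * (Real.sqrt R)⁻¹ := mul_le_mul_of_nonneg_left h2 hR0.le
        _ = Real.sqrt R := by
            rw [eq_comm, eq_mul_inv_iff_mul_eq₀ hs0.ne', hsq]
  · rintro ⟨h1, h2⟩
    constructor
    · rw [hinner, abs_mul, abs_of_pos hR0] at h1
      exact le_of_mul_le_mul_left (by linarith) hR0
    · rw [hinner, hkey, ← smul_smul, ← smul_sub, norm_smul, Real.norm_eq_abs,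
        abs_of_pos hR0] at h2
      have : ‖x - R⁻¹ • T.center - (inner ℝ (x - R⁻¹ • T.center) T.dir : ℝ) • T.dir‖
          ≤ Real.sqrt R / R := by
        rw [le_div_iff₀ hR0, mul_comm]; exact h2
      refine this.trans_eq ?_
      rw [div_eq_iff hR0.ne', eq_comm, inv_mul_eq_iff_eq_mul₀ hs0.ne', hsq]


/-- A ball of radius δ/2 centered at a point on the axis lies in the tube. -/
lemma ball_subset_tube {δ a : ℝ} (hδ0 : 0 < δ) (ha : |a| ≤ 1/2 - δ/2) (T : Tube n) :
    Metric.ball (T.center + a • T.dir) (δ/2) ⊆ Tube.set δ 1 T := by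
  intro x hx
  rw [Metric.mem_ball, dist_eq_norm] at hx
  set y := x - (T.center + a • T.dir) with hy
  have hxc : x - T.center = y + a • T.dir := by rw [hy]; abel
  have hiy : |(inner ℝ y T.dir : ℝ)| ≤ δ/2 := by
    calc |(inner ℝ y T.dir : ℝ)| ≤ ‖y‖ * ‖T.dir‖ := abs_real_inner_le_norm y T.dir
      _ = ‖y‖ := by rw [T.norm_dir, mul_one]
      _ ≤ δ/2 := hx.le
  have hinner : (inner ℝ (x - T.center) T.dir : ℝ) = (inner ℝ y T.dir : ℝ) + a := by
    rw [hxc, inner_add_left, real_inner_smul_left, real_inner_self_eq_norm_sq,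
      T.norm_dir]
    ring
  constructor
  · rw [hinner]
    calc |(inner ℝ y T.dir : ℝ) + a| ≤ |(inner ℝ y T.dir : ℝ)| + |a| := abs_add_le _ _
      _ ≤ δ/2 + (1/2 - δ/2) := add_le_add hiy ha
      _ = 1/2 := by ring
  · have : x - T.center - (inner ℝ (x - T.center) T.dir : ℝ) • T.dir
        = y - (inner ℝ y T.dir : ℝ) • T.dir := by
      rw [hinner, hxc, add_smul]; abel
    rw [this]
    calc ‖y - (inner ℝ y T.dir : ℝ) • T.dir‖ ≤ ‖y‖ + ‖(inner ℝ y T.dir : ℝ) • T.dir‖ :=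
          norm_sub_le _ _
      _ ≤ δ/2 + δ/2 := by
          refine add_le_add hx.le ?_
          rw [norm_smul, T.norm_dir, mul_one, Real.norm_eq_abs]; exact hiy
      _ = δ := by ring

lemma tube_vol_lb (hn : 1 ≤ n) {δ : ℝ} (hδ0 : 0 < δ) (hδ : δ ≤ 1/2) (T : Tube n) :
    ENNReal.ofReal (δ ^ ((n:ℝ) - 1) *
        ((volume (Metric.ball (0 : EuclideanSpace ℝ (Fin n)) 1)).toReal / (4 * 2 ^ n)))
      ≤ volume (Tube.set δ 1 T) := by
  haveI : Nonempty (Fin n) := ⟨⟨0, hn⟩⟩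
  set E := EuclideanSpace ℝ (Fin n)
  set B : ENNReal := volume (Metric.ball (0 : E) 1) with hB
  have hBfin : B ≠ ⊤ := measure_ball_lt_top.ne
  have hBpos : 0 < B := measure_ball_pos volume 0 one_pos
  set m : ℕ := ⌈1 / (4 * δ)⌉₊ with hm
  set c : ℕ → E := fun k => T.center + (-(1/2) + δ/2 + 2 * δ * k) • T.dir with hc
  -- each ball is in the tube
  have hsub : ∀ k < m, Metric.ball (c k) (δ/2) ⊆ Tube.set δ 1 T := by
    intro k hk
    apply ball_subset_tube hδ0
    have hub : (k : ℝ) ≤ 1 / (4 * δ) := by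
      have : (k : ℝ) ≤ (m : ℝ) - 1 := by
        have : (k : ℕ) + 1 ≤ m := hk
        have := Nat.cast_le (α := ℝ) |>.2 this
        push_cast at this ⊢; linarith
      have hceil : (m : ℝ) < 1 / (4 * δ) + 1 := by
        rw [hm]
        exact Nat.ceil_lt_add_one (by positivity)
      linarith
    have h2 : 2 * δ * (k:ℝ) ≤ 1/2 := by
      calc 2 * δ * (k:ℝ) ≤ 2 * δ * (1 / (4*δ)) :=
            mul_le_mul_of_nonneg_left hub (by positivity)
        _ = 1/2 := by field_simp; ring
    rw [abs_le]
    constructor <;> nlinarith [mul_nonneg (mul_nonneg (by norm_num : (0:ℝ) ≤ 2) hδ0.le) (Nat.cast_nonneg k)]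
  -- disjointness
  have hdisj : (↑(Finset.range m) : Set ℕ).PairwiseDisjoint
      (fun k => Metric.ball (c k) (δ/2)) := by
    intro j hj k hk hjk
    apply Metric.ball_disjoint_ball
    rw [dist_eq_norm, hc]
    have heq : (T.center + (-(1/2) + δ/2 + 2 * δ * (j:ℝ)) • T.dir)
        - (T.center + (-(1/2) + δ/2 + 2 * δ * (k:ℝ)) • T.dir)
        = ((2*δ*(j:ℝ)) - (2*δ*(k:ℝ))) • T.dir := by
      rw [add_sub_add_left_eq_sub, ← sub_smul]; congr 1; ring
    rw [heq, norm_smul, T.norm_dir, mul_one, Real.norm_eq_abs]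
    have h1 : (1:ℝ) ≤ |(j:ℝ) - (k:ℝ)| := by
      have : (j:ℝ) - (k:ℝ) ≠ 0 := sub_ne_zero.2 (by exact_mod_cast hjk)
      have : (1:ℝ) ≤ |(j:ℝ) - (k:ℝ)| := by
        rcases lt_or_gt_of_ne (sub_ne_zero.2 (show (j:ℝ) ≠ (k:ℝ) by exact_mod_cast hjk)) with h | h
        · rw [abs_of_neg h]
          have : (k:ℝ) ≥ (j:ℝ) + 1 := by
            have : j < k := by
              rcases Nat.lt_or_ge j k with h' | h'
              · exact h'
              · exfalso
                have : (k:ℝ) ≤ (j:ℝ) := Nat.cast_le.2 h'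
                linarith
            exact_mod_cast this
          linarith
        · rw [abs_of_pos h]
          have : (j:ℝ) ≥ (k:ℝ) + 1 := by
            have : k < j := by
              rcases Nat.lt_or_ge k j with h' | h'
              · exact h'
              · exfalso
                have : (j:ℝ) ≤ (k:ℝ) := Nat.cast_le.2 h'
                linarith
            exact_mod_cast this
          linarith
      exact this
    have : (2*δ*(j:ℝ)) - (2*δ*(k:ℝ)) = 2*δ*((j:ℝ) - (k:ℝ)) := by ring
    rw [this, abs_mul, abs_of_pos (by positivity : (0:ℝ) < 2*δ)]
    nlinarith
  -- sum up
  have hunion : (⋃ k ∈ Finset.range m, Metric.ball (c k) (δ/2)) ⊆ Tube.set δ 1 T := by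
    refine Set.iUnion₂_subset fun k hk => hsub k (Finset.mem_range.1 hk)
  have hmeasb : ∀ k ∈ Finset.range m, MeasurableSet (Metric.ball (c k) (δ/2)) :=
    fun k _ => measurableSet_ball
  have hsum : volume (⋃ k ∈ Finset.range m, Metric.ball (c k) (δ/2))
      = ∑ k ∈ Finset.range m, volume (Metric.ball (c k) (δ/2)) :=
    measure_biUnion_finset hdisj hmeasb
  have hballvol : ∀ k : ℕ, volume (Metric.ball (c k) (δ/2))
      = ENNReal.ofReal ((δ/2) ^ n) * B := by
    intro k
    rw [Measure.addHaar_ball volume (c k) (by positivity : (0:ℝ) ≤ δ/2)]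
    rw [finrank_euclideanSpace_fin]
  have hge : (m : ENNReal) * (ENNReal.ofReal ((δ/2) ^ n) * B) ≤ volume (Tube.set δ 1 T) := by
    calc (m : ENNReal) * (ENNReal.ofReal ((δ/2) ^ n) * B)
        = ∑ k ∈ Finset.range m, volume (Metric.ball (c k) (δ/2)) := by
          simp [hballvol, Finset.sum_const, nsmul_eq_mul]
      _ = volume (⋃ k ∈ Finset.range m, Metric.ball (c k) (δ/2)) := hsum.symm
      _ ≤ volume (Tube.set δ 1 T) := measure_mono hunion
  refine le_trans ?_ hge
  -- now: ofReal (δ^(n-1) * (B.toReal/(4*2^n))) ≤ m * ofReal((δ/2)^n) * B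
  have hmge : ENNReal.ofReal (1/(4*δ)) ≤ (m : ENNReal) := by
    rw [← ENNReal.ofReal_natCast m]
    exact ENNReal.ofReal_le_ofReal (Nat.le_ceil _)
  have hBeq : B = ENNReal.ofReal B.toReal := (ENNReal.ofReal_toReal hBfin).symm
  calc ENNReal.ofReal (δ ^ ((n:ℝ) - 1) * (B.toReal / (4 * 2 ^ n)))
      = ENNReal.ofReal ((1/(4*δ)) * ((δ/2)^n * B.toReal)) := by
        congr 1
        have hcast : δ ^ ((n:ℝ) - 1) = δ ^ (n - 1 : ℕ) := by
          rw [← Real.rpow_natCast δ (n-1)]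
          congr 1
          push_cast [hn]
          ring
        rw [hcast]
        have hpow : δ ^ (n - 1 : ℕ) * δ = δ ^ n := by
          rw [← pow_succ]
          congr 1
          omega
        rw [div_pow]
        field_simp
        linear_combination B.toReal * hpow
    _ = ENNReal.ofReal (1/(4*δ)) * (ENNReal.ofReal ((δ/2)^n) * B) := by
        rw [ENNReal.ofReal_mul (by positivity), ENNReal.ofReal_mul (by positivity), ← hBeq]
    _ ≤ (m : ENNReal) * (ENNReal.ofReal ((δ/2)^n) * B) :=
        mul_le_mul_left hmge _



lemma holder_core (hn : 2 ≤ n) (δ : ℝ) (Ω' : Finset (Tube n))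
    (U' : Set (EuclideanSpace ℝ (Fin n))) (hU'm : MeasurableSet U')
    (hsub : ∀ T ∈ Ω', Tube.set δ 1 T ⊆ U') :
    ∑ T ∈ Ω', volume (Tube.set δ 1 T) ≤
      eLpNorm (fun x => ∑ T ∈ Ω', (Tube.set δ 1 T).indicator (fun _ => (1:ℝ)) x)
        (ENNReal.ofReal ((n:ℝ)/((n:ℝ)-1))) volume * (volume U') ^ (1/(n:ℝ)) := by
  have hn1 : (1:ℝ) < (n:ℝ) := by exact_mod_cast lt_of_lt_of_le one_lt_two hn
  have hn0 : (0:ℝ) < (n:ℝ) := by linarith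
  set r : ℝ := (n:ℝ)/((n:ℝ)-1) with hr
  have hr1 : 1 < r := by
    rw [hr, lt_div_iff₀ (by linarith)]
    linarith
  have hr0 : 0 < r := by linarith
  have hconj : r.HolderConjugate (n:ℝ) := by
    rw [Real.holderConjugate_iff]
    constructor
    · exact hr1
    · rw [hr]
      field_simp
      ring
  set F : EuclideanSpace ℝ (Fin n) → ENNReal :=
    fun x => ∑ T ∈ Ω', (Tube.set δ 1 T).indicator (fun _ => (1:ENNReal)) x with hF
  set G : EuclideanSpace ℝ (Fin n) → ENNReal :=
    U'.indicator (fun _ => (1:ENNReal)) with hG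
  have hFmeas : Measurable F :=
    Finset.measurable_sum _ fun T _ => measurable_const.indicator (tube_meas δ 1 T)
  have hGmeas : Measurable G := measurable_const.indicator hU'm
  have hintF : ∫⁻ x, F x = ∑ T ∈ Ω', volume (Tube.set δ 1 T) := by
    rw [hF, lintegral_finset_sum _ (fun T _ => measurable_const.indicator (tube_meas δ 1 T))]
    refine Finset.sum_congr rfl fun T _ => ?_
    rw [lintegral_indicator (tube_meas δ 1 T)]
    simp
  have hFG : F = fun x => (F * G) x := by
    funext x
    by_cases hx : x ∈ U'
    · simp [hG, Set.indicator_of_mem hx]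
    · have hFx : F x = 0 := by
        rw [hF]
        refine Finset.sum_eq_zero fun T hT => ?_
        have : x ∉ Tube.set δ 1 T := fun hmem => hx (hsub T hT hmem)
        simp [Set.indicator_of_notMem this]
      simp [hFx]
  have hGpow : ∀ x, G x ^ (n:ℝ) = G x := by
    intro x
    by_cases hx : x ∈ U'
    · simp [hG, Set.indicator_of_mem hx]
    · simp [hG, Set.indicator_of_notMem hx, ENNReal.zero_rpow_of_pos hn0]
  have hintG : ∫⁻ x, G x ^ (n:ℝ) = volume U' := by
    simp only [hGpow]
    rw [hG, lintegral_indicator hU'm]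
    simp
  have holder := ENNReal.lintegral_mul_le_Lp_mul_Lq volume hconj
    hFmeas.aemeasurable hGmeas.aemeasurable
  rw [← hintF]
  calc ∫⁻ x, F x = ∫⁻ x, (F * G) x := by rw [← hFG]
    _ ≤ (∫⁻ x, F x ^ r) ^ (1/r) * (∫⁻ x, G x ^ (n:ℝ)) ^ (1/(n:ℝ)) := holder
    _ = (∫⁻ x, F x ^ r) ^ (1/r) * (volume U') ^ (1/(n:ℝ)) := by
        rw [hintG]
    _ = eLpNorm (fun x => ∑ T ∈ Ω', (Tube.set δ 1 T).indicator (fun _ => (1:ℝ)) x)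
          (ENNReal.ofReal r) volume * (volume U') ^ (1/(n:ℝ)) := by
        congr 1
        rw [eLpNorm_eq_lintegral_rpow_enorm_toReal (by simp [ENNReal.ofReal_eq_zero]; linarith)
          ENNReal.ofReal_ne_top]
        rw [ENNReal.toReal_ofReal hr0.le]
        congr 1
        refine lintegral_congr fun x => ?_
        have hnn : (0:ℝ) ≤ ∑ T ∈ Ω', (Tube.set δ 1 T).indicator (fun _ => (1:ℝ)) x :=
          Finset.sum_nonneg fun T _ => Set.indicator_nonneg (fun _ _ => zero_le_one) x
        have hFrepr : (‖∑ T ∈ Ω', (Tube.set δ 1 T).indicator (fun _ => (1:ℝ)) x‖ₑ)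
            = F x := by
          rw [Real.enorm_eq_ofReal hnn, ENNReal.ofReal_sum_of_nonneg
            (fun T _ => Set.indicator_nonneg (fun _ _ => zero_le_one) x), hF]
          refine Finset.sum_congr rfl fun T _ => ?_
          by_cases hx : x ∈ Tube.set δ 1 T <;> simp [hx]
        rw [hFrepr]

end StmtSevenAux

set_option maxHeartbeats 1000000 in
/-- the Kakeya maximal operator conjecture (r = n/(n−1)) together with
Wongkew's inequality implies the tangent-tube bound #Ω ≲ D^C R^{(n−2)/2 + ε}. -/
theorem stmt7 (n : ℕ) (hn : 2 ≤ n)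
    (hkak : KakMax n ((n : ℝ) / ((n : ℝ) - 1))) (hwong : Wongkew n) :
    ∃ C > 0, ∀ ε : ℝ, 0 < ε → ∃ Cε > 0, ∀ R : ℝ, 1 ≤ R → ∀ D : ℕ, 1 ≤ D →
      ∀ P : MvPolynomial (Fin n) ℝ, P ≠ 0 → P.totalDegree ≤ D →
      ∀ Ω : Finset (Tube n), ∀ x₀ : EuclideanSpace ℝ (Fin n),
        (∀ T ∈ Ω, Tube.set (Real.sqrt R) R T ⊆ Metric.closedBall x₀ R) →
        (∀ T ∈ Ω, ∀ T' ∈ Ω, T ≠ T' → (Real.sqrt R)⁻¹ ≤ dist T.dir T'.dir) →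
        (∀ T ∈ Ω, Tube.set (Real.sqrt R) R T ⊆
          Metric.cthickening (Real.sqrt R)
            {x : EuclideanSpace ℝ (Fin n) | MvPolynomial.eval (fun i => x i) P = 0}) →
        (Ω.card : ℝ) ≤ Cε * (D : ℝ) ^ C * R ^ (((n : ℝ) - 2) / 2 + ε) := by

  classical
  have hn1R : (1:ℝ) < (n:ℝ) := by exact_mod_cast lt_of_lt_of_le one_lt_two hn
  have hnR0 : (0:ℝ) < (n:ℝ) := by linarith
  haveI : Nonempty (Fin n) := ⟨⟨0, by omega⟩⟩
  set r : ℝ := (n:ℝ)/((n:ℝ)-1) with hrdef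
  -- the ball-volume constant
  set bR : ℝ := (volume (Metric.ball (0 : EuclideanSpace ℝ (Fin n)) 1)).toReal with hbRdef
  have hbR : 0 < bR := ENNReal.toReal_pos (measure_ball_pos volume 0 one_pos).ne'
    measure_ball_lt_top.ne
  set c₀ : ℝ := bR / (4 * 2 ^ n) with hc₀def
  have hc₀ : 0 < c₀ := by positivity
  obtain ⟨CW, hCW, hW⟩ := hwong
  refine ⟨CW, hCW, ?_⟩
  intro ε hε
  obtain ⟨C', hC', hW'⟩ := hW (ε/2) (by linarith)
  obtain ⟨CK, hCK, hK⟩ := hkak (ε/n) (by positivity)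
  refine ⟨c₀⁻¹ * CK ^ (n:ℝ) * 2 ^ ((n:ℝ) - 1 + ε) * C', by positivity, ?_⟩
  intro R hR D hD P hP hPdeg Ω x₀ hball hsep htang
  have hR0 : (0:ℝ) < R := by linarith
  have hsR1 : (1:ℝ) ≤ Real.sqrt R := by
    rw [show (1:ℝ) = Real.sqrt 1 by simp]
    exact Real.sqrt_le_sqrt hR
  have hsR0 : (0:ℝ) < Real.sqrt R := by linarith
  set δ : ℝ := (2 * Real.sqrt R)⁻¹ with hδdef
  have hδ0 : 0 < δ := by positivity
  have hδhalf : δ ≤ 1/2 := by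
    rw [hδdef]
    rw [inv_le_comm₀ (by positivity) (by norm_num)]
    · linarith
  have hδ1 : δ < 1 := by linarith
  have hδsR : δ ≤ (Real.sqrt R)⁻¹ := by
    rw [hδdef]
    apply inv_anti₀ hsR0
    linarith
  -- rescaled tubes
  set g : Tube n → Tube n := fun T => ⟨R⁻¹ • T.center, T.dir, T.norm_dir⟩ with hgdef
  have hinj : Set.InjOn g Ω := by
    intro T1 h1 T2 h2 heq
    by_contra hne
    have hd : T1.dir = T2.dir := by
      have h' := congrArg Tube.dir heq
      simpa [hgdef] using h'
    have := hsep T1 h1 T2 h2 hne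
    rw [hd, dist_self] at this
    have : (0:ℝ) < (Real.sqrt R)⁻¹ := by positivity
    linarith
  set Ω' : Finset (Tube n) := Ω.image g with hΩ'def
  have hcard : Ω'.card = Ω.card := Finset.card_image_of_injOn hinj
  have hsep' : ∀ T ∈ Ω', ∀ T' ∈ Ω', T ≠ T' → δ ≤ dist T.dir T'.dir := by
    intro T1' h1' T2' h2' hne'
    obtain ⟨T1, hT1, rfl⟩ := Finset.mem_image.1 h1'
    obtain ⟨T2, hT2, rfl⟩ := Finset.mem_image.1 h2'
    have hne : T1 ≠ T2 := fun h => hne' (by rw [h])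
    calc δ ≤ (Real.sqrt R)⁻¹ := hδsR
      _ ≤ dist T1.dir T2.dir := hsep T1 hT1 T2 hT2 hne
  -- the rescaled neighborhood
  set U : Set (EuclideanSpace ℝ (Fin n)) := Metric.cthickening (Real.sqrt R)
      {x : EuclideanSpace ℝ (Fin n) | MvPolynomial.eval (fun i => x i) P = 0} ∩ Metric.closedBall x₀ R with hUdef
  have hUclosed : IsClosed U :=
    (Metric.isClosed_cthickening).inter Metric.isClosed_closedBall
  set U' : Set (EuclideanSpace ℝ (Fin n)) := (fun x : EuclideanSpace ℝ (Fin n) => R • x) ⁻¹' U with hU'def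
  have hU'm : MeasurableSet U' :=
    (hUclosed.preimage (continuous_const_smul R)).measurableSet
  have hsub : ∀ T ∈ Ω', Tube.set δ 1 T ⊆ U' := by
    intro T' hT'
    obtain ⟨T, hT, rfl⟩ := Finset.mem_image.1 hT'
    intro x hx
    have hx' : x ∈ Tube.set (Real.sqrt R)⁻¹ 1 (g T) := tube_mono hδsR _ hx
    have : R • x ∈ Tube.set (Real.sqrt R) R T := (tube_scale hR T x).1 hx'
    exact ⟨htang T hT this, hball T hT this⟩
  -- the sum of tube volumes
  set S : ENNReal := ∑ T ∈ Ω', volume (Tube.set δ 1 T) with hSdef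
  have hSfin : S ≠ ⊤ := by
    rw [hSdef]
    refine (ENNReal.sum_lt_top.2 fun T _ => ?_).ne
    exact lt_of_le_of_lt (measure_mono (tube_subset_ball (by linarith) T))
      measure_closedBall_lt_top
  set s : ℝ := S.toReal with hsdef
  have hs0' : 0 ≤ s := ENNReal.toReal_nonneg
  have hs_sum : s = ∑ T ∈ Ω', (volume (Tube.set δ 1 T)).toReal := by
    rw [hsdef, hSdef]
    exact ENNReal.toReal_sum fun T _ =>
      (lt_of_le_of_lt (measure_mono (tube_subset_ball (by linarith) T))
        measure_closedBall_lt_top).ne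
  -- Step A : lower bound for s
  have hstepA : (Ω.card : ℝ) * (δ ^ ((n:ℝ) - 1) * c₀) ≤ s := by
    have h1 : ENNReal.ofReal ((Ω.card : ℝ) * (δ ^ ((n:ℝ) - 1) * c₀)) ≤ S := by
      rw [ENNReal.ofReal_mul (by positivity), ← hcard]
      calc ENNReal.ofReal (Ω'.card : ℝ) * ENNReal.ofReal (δ ^ ((n:ℝ) - 1) * c₀)
          = Ω'.card • ENNReal.ofReal (δ ^ ((n:ℝ) - 1) * c₀) := by
            rw [ENNReal.ofReal_natCast, nsmul_eq_mul]
        _ ≤ ∑ T ∈ Ω', volume (Tube.set δ 1 T) := by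
            refine Finset.card_nsmul_le_sum Ω' _ _ fun T _ => ?_
            exact tube_vol_lb (by omega) hδ0 hδhalf T
    exact (ENNReal.ofReal_le_iff_le_toReal hSfin).1 h1
  -- Step B : Wongkew bound for the rescaled neighborhood
  have hUsmul : U' = (R⁻¹ • U : Set (EuclideanSpace ℝ (Fin n))) := by
    ext x
    rw [Set.mem_smul_set_iff_inv_smul_mem₀ (by positivity : R⁻¹ ≠ 0), inv_inv]
    rfl
  have hUfin : volume U ≠ ⊤ := by
    refine (lt_of_le_of_lt (measure_mono Set.inter_subset_right) ?_).ne
    exact measure_closedBall_lt_top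
  have hWong : volume U ≤ ENNReal.ofReal (C' * (D:ℝ) ^ CW * R ^ ((n:ℝ) - 1/2 + ε/2)) :=
    hW' D hD P hP hPdeg R hR x₀
  set u : ℝ := (volume U').toReal with hudef
  have hU'vol : volume U' = ENNReal.ofReal (|R⁻¹ ^ Module.finrank ℝ (EuclideanSpace ℝ (Fin n))|) * volume U := by
    rw [hUsmul]
    exact Measure.addHaar_smul volume R⁻¹ U
  have hfrk : Module.finrank ℝ (EuclideanSpace ℝ (Fin n)) = n := finrank_euclideanSpace_fin
  have hU'fin : volume U' ≠ ⊤ := by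
    rw [hU'vol]
    exact ENNReal.mul_ne_top ENNReal.ofReal_ne_top hUfin
  have hu_le : u ≤ (R⁻¹) ^ n * (C' * (D:ℝ) ^ CW * R ^ ((n:ℝ) - 1/2 + ε/2)) := by
    rw [hudef, hU'vol, hfrk, ENNReal.toReal_mul,
      ENNReal.toReal_ofReal (abs_nonneg _), abs_of_nonneg (by positivity)]
    refine mul_le_mul_of_nonneg_left ?_ (by positivity)
    exact ENNReal.toReal_le_of_le_ofReal (by positivity) hWong
  have hu0 : 0 ≤ u := ENNReal.toReal_nonneg
  -- Step C : Kakeya + Hölder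
  have hrexp : (n:ℝ)/r - ((n:ℝ) - 1) = 0 := by
    rw [hrdef]
    field_simp
    ring
  have hkakineq := hK δ hδ0 hδ1 Ω' hsep'
  have hmain : s ≤ CK * δ ^ (-(ε/n)) * s ^ (1/r) * u ^ (1/(n:ℝ)) := by
    have hchain : S ≤ ENNReal.ofReal (CK * δ ^ (-(ε/n)) * s ^ (1/r) * u ^ (1/(n:ℝ))) := by
      calc S ≤ eLpNorm (fun x => ∑ T ∈ Ω', (Tube.set δ 1 T).indicator (fun _ => (1:ℝ)) x)
            (ENNReal.ofReal r) volume * (volume U') ^ (1/(n:ℝ)) :=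
            holder_core hn δ Ω' U' hU'm hsub
        _ ≤ ENNReal.ofReal (CK * δ ^ (-(ε/n)) * s ^ (1/r)) *
              ENNReal.ofReal (u ^ (1/(n:ℝ))) := by
            refine mul_le_mul' ?_ ?_
            · refine le_trans hkakineq (le_of_eq ?_)
              rw [hrexp, Real.rpow_zero, mul_one, ← hs_sum]
            · rw [← ENNReal.ofReal_toReal hU'fin, ← hudef,
                ← ENNReal.ofReal_rpow_of_nonneg hu0 (by positivity)]
        _ = ENNReal.ofReal (CK * δ ^ (-(ε/n)) * s ^ (1/r) * u ^ (1/(n:ℝ))) := by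
            rw [← ENNReal.ofReal_mul (by positivity)]
    rw [← ENNReal.ofReal_toReal hSfin, ENNReal.ofReal_le_ofReal_iff (by positivity)]
      at hchain
    exact hchain
  -- dispose of the empty case
  rcases Finset.eq_empty_or_nonempty Ω with hΩe | hΩne
  · rw [hΩe]
    simp only [Finset.card_empty, Nat.cast_zero]
    positivity
  -- s is positive
  have hcard1 : (1:ℝ) ≤ (Ω.card : ℝ) := by
    exact_mod_cast Finset.card_pos.2 hΩne
  have hs0 : 0 < s := by
    have hXc : 0 < δ ^ ((n:ℝ) - 1) * c₀ := by positivity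
    calc (0:ℝ) < 1 * (δ ^ ((n:ℝ) - 1) * c₀) := by linarith
      _ ≤ (Ω.card : ℝ) * (δ ^ ((n:ℝ) - 1) * c₀) :=
          mul_le_mul_of_nonneg_right hcard1 hXc.le
      _ ≤ s := hstepA
  -- solve for s
  have hsolve : s ≤ CK ^ (n:ℝ) * δ ^ (-ε) * u := by
    have hsum_exp : 1/r + 1/(n:ℝ) = 1 := by
      rw [hrdef]; field_simp; ring
    have hsplit : s = s ^ (1/r) * s ^ (1/(n:ℝ)) := by
      rw [← Real.rpow_add hs0, hsum_exp, Real.rpow_one]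
    have h1 : s ^ (1/(n:ℝ)) ≤ CK * δ ^ (-(ε/n)) * u ^ (1/(n:ℝ)) := by
      have hpos : 0 < s ^ (1/r) := Real.rpow_pos_of_pos hs0 _
      have : s ^ (1/r) * s ^ (1/(n:ℝ)) ≤
          (CK * δ ^ (-(ε/n)) * u ^ (1/(n:ℝ))) * s ^ (1/r) := by
        rw [← hsplit]
        calc s ≤ CK * δ ^ (-(ε/n)) * s ^ (1/r) * u ^ (1/(n:ℝ)) := hmain
          _ = (CK * δ ^ (-(ε/n)) * u ^ (1/(n:ℝ))) * s ^ (1/r) := by ring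
      rw [mul_comm (s ^ (1/r))] at this
      exact le_of_mul_le_mul_right this hpos
    calc s = (s ^ (1/(n:ℝ))) ^ (n:ℝ) := by
          rw [← Real.rpow_mul hs0.le, one_div, inv_mul_cancel₀ hnR0.ne', Real.rpow_one]
      _ ≤ (CK * δ ^ (-(ε/n)) * u ^ (1/(n:ℝ))) ^ (n:ℝ) :=
          Real.rpow_le_rpow (by positivity) h1 hnR0.le
      _ = CK ^ (n:ℝ) * δ ^ (-ε) * u := by
          rw [Real.mul_rpow (by positivity) (by positivity),
            Real.mul_rpow (by positivity) (by positivity),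
            ← Real.rpow_mul hδ0.le, ← Real.rpow_mul hu0,
            show -(ε/n) * (n:ℝ) = -ε by field_simp,
            show 1/(n:ℝ) * (n:ℝ) = 1 by field_simp, Real.rpow_one]
  -- final power bookkeeping
  have hδpow : ∀ a : ℝ, δ ^ a = 2 ^ (-a) * R ^ (-a/2) := by
    intro a
    have h2s : (0:ℝ) ≤ 2 * Real.sqrt R := by positivity
    rw [hδdef, Real.inv_rpow h2s, ← Real.rpow_neg h2s,
      Real.mul_rpow (by norm_num) (Real.sqrt_nonneg R),
      Real.sqrt_eq_rpow, ← Real.rpow_mul hR0.le,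
      show 1/2 * (-a) = -a/2 by ring]
  have hRmerge : ∀ a b : ℝ, R ^ a * R ^ b = R ^ (a+b) :=
    fun a b => (Real.rpow_add hR0 a b).symm
  have h2merge : ∀ a b : ℝ, (2:ℝ) ^ a * (2:ℝ) ^ b = 2 ^ (a+b) :=
    fun a b => (Real.rpow_add two_pos a b).symm
  have hinvn : (R⁻¹ : ℝ) ^ n = R ^ (-(n:ℝ)) := by
    rw [Real.rpow_neg hR0.le, Real.rpow_natCast, inv_pow]
  set A : ℝ := CK ^ (n:ℝ) * C' * (D:ℝ) ^ CW with hAdef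
  have hkey : CK ^ (n:ℝ) * δ ^ (-ε) * ((R⁻¹) ^ n * (C' * (D:ℝ) ^ CW * R ^ ((n:ℝ) - 1/2 + ε/2)))
      = (δ ^ ((n:ℝ) - 1) * c₀) *
        ((c₀⁻¹ * CK ^ (n:ℝ) * 2 ^ ((n:ℝ) - 1 + ε) * C') * (D:ℝ) ^ CW *
          R ^ (((n:ℝ) - 2) / 2 + ε)) := by
    rw [hδpow (-ε), hδpow ((n:ℝ) - 1), hinvn, neg_neg]
    have lhs_eq : A * ((2:ℝ) ^ ε * (R ^ (ε/2) * (R ^ (-(n:ℝ)) * R ^ ((n:ℝ) - 1/2 + ε/2))))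
        = A * ((2:ℝ) ^ ε * R ^ (ε - 1/2)) := by
      rw [hRmerge, hRmerge, show ε/2 + (-(n:ℝ) + ((n:ℝ) - 1/2 + ε/2)) = ε - 1/2 by ring]
    have rhs_eq : A * ((c₀ * c₀⁻¹) *
          (((2:ℝ) ^ (-((n:ℝ) - 1)) * (2:ℝ) ^ ((n:ℝ) - 1 + ε)) *
            (R ^ (-((n:ℝ) - 1)/2) * R ^ (((n:ℝ) - 2)/2 + ε))))
        = A * ((2:ℝ) ^ ε * R ^ (ε - 1/2)) := by
      rw [mul_inv_cancel₀ hc₀.ne', hRmerge, h2merge,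
        show -((n:ℝ) - 1) + ((n:ℝ) - 1 + ε) = ε by ring,
        show -((n:ℝ) - 1)/2 + (((n:ℝ) - 2)/2 + ε) = ε - 1/2 by ring, one_mul]
    calc CK ^ (n:ℝ) * ((2:ℝ) ^ ε * R ^ (ε/2)) *
          (R ^ (-(n:ℝ)) * (C' * (D:ℝ) ^ CW * R ^ ((n:ℝ) - 1/2 + ε/2)))
        = A * ((2:ℝ) ^ ε * (R ^ (ε/2) * (R ^ (-(n:ℝ)) * R ^ ((n:ℝ) - 1/2 + ε/2)))) := by
          rw [hAdef]; ring
      _ = A * ((2:ℝ) ^ ε * R ^ (ε - 1/2)) := lhs_eq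
      _ = A * ((c₀ * c₀⁻¹) *
          (((2:ℝ) ^ (-((n:ℝ) - 1)) * (2:ℝ) ^ ((n:ℝ) - 1 + ε)) *
            (R ^ (-((n:ℝ) - 1)/2) * R ^ (((n:ℝ) - 2)/2 + ε)))) := rhs_eq.symm
      _ = (2:ℝ) ^ (-((n:ℝ) - 1)) * R ^ (-((n:ℝ) - 1)/2) * c₀ *
          (c₀⁻¹ * CK ^ (n:ℝ) * (2:ℝ) ^ ((n:ℝ) - 1 + ε) * C' * (D:ℝ) ^ CW *
            R ^ (((n:ℝ) - 2)/2 + ε)) := by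
          rw [hAdef]; ring
  have hX : (0:ℝ) < δ ^ ((n:ℝ) - 1) * c₀ := by positivity
  have hfin1 : (Ω.card : ℝ) * (δ ^ ((n:ℝ) - 1) * c₀) ≤
      CK ^ (n:ℝ) * δ ^ (-ε) * ((R⁻¹) ^ n * (C' * (D:ℝ) ^ CW * R ^ ((n:ℝ) - 1/2 + ε/2))) := by
    refine hstepA.trans (hsolve.trans ?_)
    exact mul_le_mul_of_nonneg_left hu_le (by positivity)
  rw [hkey] at hfin1
  have hfin2 : (Ω.card : ℝ) * (δ ^ ((n:ℝ) - 1) * c₀) ≤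
      ((c₀⁻¹ * CK ^ (n:ℝ) * 2 ^ ((n:ℝ) - 1 + ε) * C') * (D:ℝ) ^ CW *
        R ^ (((n:ℝ) - 2) / 2 + ε)) * (δ ^ ((n:ℝ) - 1) * c₀) := by
    calc (Ω.card : ℝ) * (δ ^ ((n:ℝ) - 1) * c₀) ≤ _ := hfin1
      _ = _ := by ring
  exact le_of_mul_le_mul_right hfin2 hX
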